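/- Let R be a Noetherian local domain, P a nonzero nonmaximal prime of R, {R_n} a sequence of local quadratic transforms of R along R_P with induced sequence {R̄_n} of local quadratic transforms of R̄ = R/P. Set S = ⋃ R_n and S̄ = ⋃ R̄_n, and let S̃ be the pullback of S̄ along R_P → κ(P). If S̄ is a rank 1 valuation ring with real-valued valuation ν and the multiplicity sequence Σ_n ν(m̄_n) diverges, then S = S̃; that is, PR_P ⊆ S. -/
import Mathlib


open Filter

section GenLQT

variable (F : Type) [Field F]

/-- The nonunits of a local subring `A` of a field `F`. -/
def genMaxSet (A : Subring F) : Set F :=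
  {a | a ∈ A ∧ ¬ ∃ b ∈ A, a * b = 1}

/-- The ring `A[m_A/x]`. -/
def genBlowup (A : Subring F) (x : F) : Subring F :=
  Subring.closure ((A : Set F) ∪ {y | ∃ a ∈ genMaxSet F A, y * x = a})

/-- `A'` is a local quadratic transform of the local subring `A` of `F`. -/
def IsGenLQT (A A' : Subring F) : Prop :=
  ∃ x ∈ genMaxSet F A, x ≠ 0 ∧
    ∃ Q : Ideal (genBlowup F A x), Q.IsPrime ∧
      (∀ a ∈ genMaxSet F A, ∃ q : genBlowup F A x, q ∈ Q ∧ (q : F) = a) ∧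
      (A' : Set F) = {y | ∃ b s : genBlowup F A x, s ∉ Q ∧ y * (s : F) = (b : F)}

/-- The pullback `α⁻¹(T)` of a subset `T` of `κ(P)` along `α : R_P → κ(P)`. -/
def pullbackSet (RP : Subring F) (K : Type) [Field K] (α : RP →+* K) (T : Set K) :
    Set F :=
  {y | ∃ h : y ∈ RP, α ⟨y, h⟩ ∈ T}

end GenLQT

lemma genLQT_props {F : Type} [Field F] {A A' : Subring F} (h : IsGenLQT F A A') :
    ∃ x ∈ genMaxSet F A, x ≠ 0 ∧ A ≤ A' ∧
      (∀ a ∈ genMaxSet F A, a * x⁻¹ ∈ A') ∧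
      (∀ a ∈ genMaxSet F A', ∃ u ∈ A', (1 + a) * u = 1) := by
  obtain ⟨x, hxm, hx0, Q, hQ, hlift, hA'⟩ := h
  have hone : (1 : genBlowup F A x) ∉ Q := fun h1 => hQ.ne_top (Q.eq_top_iff_one.mpr h1)
  have hmem : ∀ (b s : genBlowup F A x), s ∉ Q → ∀ y : F, y * (s : F) = (b : F) → y ∈ A' := by
    intro b s hs y hys
    have : y ∈ (A' : Set F) := by rw [hA']; exact ⟨b, s, hs, hys⟩
    exact this
  have hAle : A ≤ A' := by
    intro a ha
    exact hmem ⟨a, Subring.subset_closure (Or.inl ha)⟩ 1 hone a (by simp)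
  refine ⟨x, hxm, hx0, hAle, ?_, ?_⟩
  · intro a ha
    have haB : a * x⁻¹ ∈ genBlowup F A x :=
      Subring.subset_closure (Or.inr ⟨a, ha, by field_simp⟩)
    exact hmem ⟨_, haB⟩ 1 hone _ (by simp)
  · rintro a ⟨haA', hanu⟩
    have haA'' : a ∈ (A' : Set F) := haA'
    rw [hA'] at haA''
    obtain ⟨b, s, hsQ, habs⟩ := haA''
    have hs0 : (s : F) ≠ 0 := fun h => hsQ (by rw [ZeroMemClass.coe_eq_zero.mp h]; exact Q.zero_mem)
    by_cases hbQ : b ∈ Q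
    · have hsbQ : s + b ∉ Q := fun h => hsQ (by simpa using Q.sub_mem h hbQ)
      have hsb0 : ((s : F) + (b : F)) ≠ 0 := by
        intro h
        apply hsbQ
        have : ((s + b : genBlowup F A x) : F) = 0 := by push_cast; exact h
        rw [ZeroMemClass.coe_eq_zero.mp this]; exact Q.zero_mem
      have humem : (s : F) * ((s : F) + (b : F))⁻¹ ∈ A' := by
        refine hmem s (s + b) hsbQ _ ?_
        push_cast
        field_simp
      refine ⟨(s : F) * ((s : F) + (b : F))⁻¹, humem, ?_⟩
      have h1a : (1 + a) * (s : F) = (s : F) + (b : F) := by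
        rw [add_mul, one_mul, habs]
      rw [← mul_assoc, h1a, mul_inv_cancel₀ hsb0]
    · exfalso
      apply hanu
      have hb0 : (b : F) ≠ 0 := fun h => hbQ (by rw [ZeroMemClass.coe_eq_zero.mp h]; exact Q.zero_mem)
      refine ⟨(s : F) * (b : F)⁻¹, hmem s b hbQ _ (by field_simp), ?_⟩
      rw [← mul_assoc, habs, mul_inv_cancel₀ hb0]

/-- Let `{Rₙ}` be a sequence of local quadratic transforms of a Noetherian local domain
`R` along `R_P`, with induced sequence `{R̄ₙ}` of local quadratic transforms of
`R̄ = R/P`; set `S = ⋃ Rₙ`, `S̄ = ⋃ R̄ₙ`, and let `S̃` be the pullback of `S̄` along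
`α : R_P → κ(P)`.  If `S̄` is a rank 1 valuation ring with real-valued valuation `ν` and
the multiplicity sequence `∑ₙ ν(m̄ₙ)` diverges, then `S = S̃`; that is,
`PR_P ⊆ S`. -/
theorem union_eq_pullback_of_divergent_multiplicity
    (F : Type) [Field F] (R : Subring F)
    [IsNoetherianRing R] [IsLocalRing R]
    (hfrac : ∀ y : F, ∃ a b : R, b ≠ 0 ∧ y * (b : F) = (a : F))
    (P : Ideal R) (hPp : P.IsPrime) (hPne : P ≠ ⊥)
    (hPnm : P ≠ IsLocalRing.maximalIdeal R)
    (RP : Subring F)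
    (hRP : (RP : Set F) = {y : F | ∃ a s : R, s ∉ P ∧ y * (s : F) = (a : F)})
    (K : Type) [Field K] (α : RP →+* K) (hαsurj : Function.Surjective α)
    (hker : ∀ y : RP, α y = 0 ↔
      ∃ p s : R, p ∈ P ∧ s ∉ P ∧ (y : F) * (s : F) = (p : F))
    (seq : ℕ → Subring F) (hseq0 : seq 0 = R)
    (hseq : ∀ n, IsGenLQT F (seq n) (seq (n + 1)) ∧ seq n ≤ RP)
    (ν : K → ℝ)
    (hmul : ∀ a b : K, a ≠ 0 → b ≠ 0 → ν (a * b) = ν a + ν b)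
    (hadd : ∀ a b : K, a ≠ 0 → b ≠ 0 → a + b ≠ 0 → min (ν a) (ν b) ≤ ν (a + b))
    (hSbarval : ∀ y : K, y ≠ 0 →
      ((∃ n, y ∈ Subring.map α (Subring.comap RP.subtype (seq n))) ↔ 0 ≤ ν y))
    (μ : ℕ → ℝ)
    (hμ : ∀ n, μ n = sInf (ν ''
      {a | a ∈ genMaxSet K (Subring.map α (Subring.comap RP.subtype (seq n))) ∧ a ≠ 0}))
    (hdiv : Tendsto (fun N => ∑ n ∈ Finset.range N, μ n) atTop atTop) :
    pullbackSet F RP K α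
        (⋃ n, (Subring.map α (Subring.comap RP.subtype (seq n)) : Set K)) =
      ⋃ n, (seq n : Set F) ∧
    ∀ y : F, (∃ q t : R, q ∈ P ∧ t ∉ P ∧ y * (t : F) = (q : F)) →
      ∃ n, y ∈ seq n := by
  have hle : ∀ i, seq i ≤ RP := fun i => (hseq i).2
  -- an element of `seq i` killed by `α` is a nonunit of `seq i`
  have hnu : ∀ (i : ℕ) (a : F) (ha : a ∈ seq i), α ⟨a, hle i ha⟩ = 0 →
      a ∈ genMaxSet F (seq i) := by
    intro i a ha h0
    refine ⟨ha, ?_⟩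
    rintro ⟨b, hb, hab⟩
    have h1 : (⟨a, hle i ha⟩ * ⟨b, hle i hb⟩ : RP) = 1 := Subtype.ext (by simpa using hab)
    have h2 := congrArg α h1
    rw [map_mul, map_one, h0, zero_mul] at h2
    exact zero_ne_one h2
  -- each `seq i` is local in the relevant sense
  have hloc : ∀ (i : ℕ), ∀ a ∈ genMaxSet F (seq i), ∃ u ∈ seq i, (1 + a) * u = 1 := by
    intro i
    cases i with
    | zero =>
      rw [hseq0]
      rintro a ⟨haR, hanu⟩
      have hnuR : ¬ IsUnit (⟨a, haR⟩ : R) := by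
        intro hu
        obtain ⟨b, hb⟩ := hu.exists_right_inv
        exact hanu ⟨(b : F), b.2, by simpa using congrArg (Subtype.val) hb⟩
      have : IsUnit ((1 : R) + ⟨a, haR⟩) := by
        rcases IsLocalRing.isUnit_or_isUnit_one_sub_self (-(⟨a, haR⟩ : R)) with h | h
        · exact absurd h.neg (by simpa using hnuR)
        · simpa [sub_neg_eq_add] using h
      obtain ⟨b, hb⟩ := this.exists_right_inv
      refine ⟨(b : F), b.2, ?_⟩
      simpa using congrArg (Subtype.val) hb
    | succ m =>
      obtain ⟨x, hxm, hx0, hle', hdivmem, hloc'⟩ := genLQT_props (hseq m).1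
      exact hloc'
  -- the key induction on the remaining valuation budget
  have key : ∀ (k : ℕ), ∀ (i : ℕ) (y tt qq : F) (htt : tt ∈ seq i) (hqq : qq ∈ seq i),
      α ⟨tt, hle i htt⟩ ≠ 0 → α ⟨qq, hle i hqq⟩ = 0 → y * tt = qq →
      ν (α ⟨tt, hle i htt⟩) < ∑ j ∈ Finset.Ico i (i + k), μ j → ∃ n, y ∈ seq n := by
    intro k
    induction k with
    | zero =>
      intro i y tt qq htt hqq hτ hq0 hy hlt
      rw [Nat.add_zero, Finset.Ico_self, Finset.sum_empty] at hlt
      have h0le : 0 ≤ ν (α ⟨tt, hle i htt⟩) := by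
        refine (hSbarval _ hτ).mp ⟨i, ?_⟩
        exact Subring.mem_map.mpr ⟨⟨tt, hle i htt⟩, Subring.mem_comap.mpr (by simpa using htt), rfl⟩
      linarith
    | succ k ih =>
      intro i y tt qq htt hqq hτ hq0 hy hlt
      by_cases hu : ∃ u ∈ seq i, tt * u = 1
      · obtain ⟨u, hu, htu⟩ := hu
        refine ⟨i, ?_⟩
        have hyq : y = qq * u := by
          calc y = y * (tt * u) := by rw [htu, mul_one]
          _ = (y * tt) * u := by ring
          _ = qq * u := by rw [hy]
        rw [hyq]; exact mul_mem hqq hu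
      · have httm : tt ∈ genMaxSet F (seq i) := ⟨htt, hu⟩
        have hqqm : qq ∈ genMaxSet F (seq i) := hnu i qq hqq hq0
        obtain ⟨x, hxm, hx0, hle', hdivmem, _⟩ := genLQT_props (hseq i).1
        have htt' : tt * x⁻¹ ∈ seq (i + 1) := hdivmem tt httm
        have hqq' : qq * x⁻¹ ∈ seq (i + 1) := hdivmem qq hqqm
        have hxRP : x ∈ RP := hle i hxm.1
        have hfact : (⟨tt, hle i htt⟩ : RP) = ⟨tt * x⁻¹, hle (i+1) htt'⟩ * ⟨x, hxRP⟩ :=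
          Subtype.ext (by simp [inv_mul_cancel_right₀ hx0])
        have hτeq : α ⟨tt, hle i htt⟩ = α ⟨tt * x⁻¹, hle (i+1) htt'⟩ * α ⟨x, hxRP⟩ := by
          rw [hfact, map_mul]
        rw [hτeq] at hτ
        have hτtt' : α ⟨tt * x⁻¹, hle (i+1) htt'⟩ ≠ 0 := (mul_ne_zero_iff.mp hτ).1
        have hτx : α ⟨x, hxRP⟩ ≠ 0 := (mul_ne_zero_iff.mp hτ).2
        have hfactq : (⟨qq, hle i hqq⟩ : RP) = ⟨qq * x⁻¹, hle (i+1) hqq'⟩ * ⟨x, hxRP⟩ :=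
          Subtype.ext (by simp [inv_mul_cancel_right₀ hx0])
        have hq0' : α ⟨qq * x⁻¹, hle (i+1) hqq'⟩ = 0 := by
          rw [hfactq, map_mul] at hq0
          exact (mul_eq_zero.mp hq0).resolve_right hτx
        have hy' : y * (tt * x⁻¹) = qq * x⁻¹ := by rw [← mul_assoc, hy]
        -- the image of x is a nonzero nonunit of the image ring
        have hxbar : α ⟨x, hxRP⟩ ∈
            genMaxSet K (Subring.map α (Subring.comap RP.subtype (seq i))) := by
          constructor
          · exact Subring.mem_map.mpr ⟨⟨x, hxRP⟩, Subring.mem_comap.mpr (by simpa using hxm.1), rfl⟩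
          · rintro ⟨z, hz, hxz⟩
            obtain ⟨u, hu, rfl⟩ := Subring.mem_map.mp hz
            have huF : (u : F) ∈ seq i := by simpa using Subring.mem_comap.mp hu
            set kR : RP := ⟨x, hxRP⟩ * u - 1 with hkRdef
            have hkF : (kR : F) ∈ seq i := by
              have : (kR : F) = x * (u : F) - 1 := by push_cast [hkRdef]; ring
              rw [this]
              exact sub_mem (mul_mem hxm.1 huF) (one_mem _)
            have hαk : α kR = 0 := by
              rw [hkRdef, map_sub, map_mul, map_one, hxz, sub_self]
            have hαk' : α ⟨(kR : F), hle i hkF⟩ = 0 := by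
              have : (⟨(kR : F), hle i hkF⟩ : RP) = kR := Subtype.ext rfl
              rw [this, hαk]
            obtain ⟨v, hv, hvone⟩ := hloc i (kR : F) (hnu i (kR : F) hkF hαk')
            have h1k : (1 : F) + (kR : F) = x * (u : F) := by push_cast [hkRdef]; ring
            have hxuv : x * ((u : F) * v) = 1 := by
              rw [← mul_assoc, ← h1k]; exact hvone
            exact hxm.2 ⟨(u : F) * v, mul_mem huF hv, hxuv⟩
        have hμle : μ i ≤ ν (α ⟨x, hxRP⟩) := by
          rw [hμ i]
          apply csInf_le
          · refine ⟨0, ?_⟩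
            rintro r ⟨a, ⟨ham, ha0⟩, rfl⟩
            exact (hSbarval a ha0).mp ⟨i, ham.1⟩
          · exact ⟨_, ⟨hxbar, hτx⟩, rfl⟩
        have hmulapp : ν (α ⟨tt, hle i htt⟩) =
            ν (α ⟨tt * x⁻¹, hle (i+1) htt'⟩) + ν (α ⟨x, hxRP⟩) := by
          rw [hτeq]; exact hmul _ _ hτtt' hτx
        have hsum : ∑ j ∈ Finset.Ico i (i + (k + 1)), μ j =
            μ i + ∑ j ∈ Finset.Ico (i + 1) ((i + 1) + k), μ j := by
          have h' : i + (k + 1) = (i + 1) + k := by omega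
          rw [Finset.sum_eq_sum_Ico_succ_bot (by omega), h']
        refine ih (i + 1) y (tt * x⁻¹) (qq * x⁻¹) htt' hqq' hτtt' hq0' hy' ?_
        rw [hsum] at hlt
        linarith
  -- the second conjunct
  have main : ∀ y : F, (∃ q t : R, q ∈ P ∧ t ∉ P ∧ y * (t : F) = (q : F)) →
      ∃ n, y ∈ seq n := by
    rintro y ⟨q, t, hqP, htP, hyt⟩
    have htF : (t : F) ∈ seq 0 := by rw [hseq0]; exact t.2
    have hqF : (q : F) ∈ seq 0 := by rw [hseq0]; exact q.2
    have hτt : α ⟨(t : F), hle 0 htF⟩ ≠ 0 := by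
      intro h
      obtain ⟨p, s, hp, hs, hts⟩ := (hker _).mp h
      have hts2 : (t : F) * (s : F) = (p : F) := hts
      have hts' : t * s = p := by exact_mod_cast hts2
      have : t * s ∈ P := hts' ▸ hp
      rcases hPp.mem_or_mem this with h' | h'
      · exact htP h'
      · exact hs h'
    have hτq : α ⟨(q : F), hle 0 hqF⟩ = 0 := by
      refine (hker _).mpr ⟨q, 1, hqP, ?_, by simp⟩
      exact fun h1 => hPp.ne_top (P.eq_top_iff_one.mpr h1)
    obtain ⟨M, hM⟩ := (hdiv.eventually_gt_atTop (ν (α ⟨(t : F), hle 0 htF⟩))).exists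
    refine key M 0 y (t : F) (q : F) htF hqF hτt hτq hyt ?_
    rw [Nat.zero_add, ← Finset.range_eq_Ico]
    exact hM
  -- monotonicity
  have hmono : ∀ i j, i ≤ j → seq i ≤ seq j := by
    intro i j h
    induction j, h using Nat.le_induction with
    | base => exact le_refl _
    | succ n hn ihn =>
      obtain ⟨x, hxm, hx0, hle', _, _⟩ := genLQT_props (hseq n).1
      exact ihn.trans hle'
  refine ⟨?_, main⟩
  apply Set.Subset.antisymm
  · rintro y ⟨h, hT⟩
    obtain ⟨n, hn⟩ := Set.mem_iUnion.mp hT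
    obtain ⟨z, hz, hαz⟩ := Subring.mem_map.mp hn
    have hzF : (z : F) ∈ seq n := by simpa using Subring.mem_comap.mp hz
    set d : RP := ⟨y, h⟩ - z with hd
    have hαd : α d = 0 := by rw [hd, map_sub, hαz, sub_self]
    obtain ⟨p, s, hp, hs, hds⟩ := (hker d).mp hαd
    obtain ⟨m, hm⟩ := main (d : F) ⟨p, s, hp, hs, hds⟩
    have hysum : y = (z : F) + (d : F) := by rw [hd]; push_cast; ring
    refine Set.mem_iUnion.mpr ⟨max n m, ?_⟩
    rw [hysum]
    exact add_mem (hmono n _ (le_max_left n m) hzF) (hmono m _ (le_max_right n m) hm)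
  · intro y hy
    obtain ⟨n, hn⟩ := Set.mem_iUnion.mp hy
    refine ⟨hle n hn, Set.mem_iUnion.mpr ⟨n, ?_⟩⟩
    exact Subring.mem_map.mpr ⟨⟨y, hle n hn⟩, Subring.mem_comap.mpr (by simpa using hn), rfl⟩
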